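/- Let T be a finite tree on vertex set V and let P ⊆ V × V be a set of ordered pairs. Then T is P-orientable if and only if there do not exist pairs (u₁,v₁), (u₂,v₂) ∈ P and an edge {a,b} of T such that the unique path in T from u₁ to v₁ traverses this edge in the direction from a to b while the unique path in T from u₂ to v₂ traverses it in the direction from b to a. -/

import Mathlib

/-- `D` is an orientation of the undirected graph `H`: each edge of `H` is assigned
exactly one of its two possible directions. -/
def IsOrientation {V : Type*} (H : SimpleGraph V) (D : V → V → Prop) : Prop :=
  ∀ u v : V, (H.Adj u v ↔ (D u v ∨ D v u)) ∧ ¬ (D u v ∧ D v u)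

/-- `G` is `P`-orientable: it admits an orientation `D` that contains a directed
path from `u` to `v` for every `(u,v) ∈ P`. -/
def POrientable {V : Type*} (G : SimpleGraph V) (P : Set (V × V)) : Prop :=
  ∃ D : V → V → Prop, IsOrientation G D ∧ ∀ p ∈ P, Relation.ReflTransGen D p.1 p.2

namespace ProofAux

variable {V : Type*} {T : SimpleGraph V}

/-- Split a path at a dart: the parts before and after avoid the edge. -/
lemma path_split {u v : V} (w : T.Walk u v) (hw : w.IsPath) {a b : V} (hab : T.Adj a b)
    (hd : (⟨(a, b), hab⟩ : T.Dart) ∈ w.darts) :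
    ∃ (w₁ : T.Walk u a) (w₂ : T.Walk b v),
      s(a, b) ∉ w₁.edges ∧ s(a, b) ∉ w₂.edges := by
  induction w with
  | nil => simp at hd
  | @cons u x v h w' ih =>
    rw [SimpleGraph.Walk.darts_cons, List.mem_cons] at hd
    rcases hd with hd | hd
    · have hp : (a, b) = (u, x) := congrArg SimpleGraph.Dart.toProd hd
      obtain ⟨rfl, rfl⟩ := Prod.mk.injEq .. ▸ hp
      refine ⟨SimpleGraph.Walk.nil, w', by simp, ?_⟩
      have hnd := hw.edges_nodup
      rw [SimpleGraph.Walk.edges_cons, List.nodup_cons] at hnd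
      exact hnd.1
    · obtain ⟨w₁, w₂, h₁, h₂⟩ := ih hw.of_cons hd
      refine ⟨SimpleGraph.Walk.cons h w₁, w₂, ?_, h₂⟩
      rw [SimpleGraph.Walk.edges_cons, List.mem_cons]
      rintro (heq | hmem)
      · have hnd := hw.edges_nodup
        rw [SimpleGraph.Walk.edges_cons, List.nodup_cons] at hnd
        have hmem' : s(a, b) ∈ w'.edges :=
          List.mem_map_of_mem (f := SimpleGraph.Dart.edge) hd
        exact hnd.1 (heq ▸ hmem')
      · exact h₁ hmem

/-- Crossing lemma: if the edge {a,b} is a bridge-like cut separating u-side (containing a)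
from v-side (containing b), every walk from u to v uses the dart (a,b). -/
lemma cross {a b : V} (hab : T.Adj a b)
    (hbr : ¬ ∃ p : T.Walk a b, s(a, b) ∉ p.edges) :
    ∀ {u v : V} (w : T.Walk u v) (wu : T.Walk u a), s(a, b) ∉ wu.edges →
      ∀ (wv : T.Walk b v), s(a, b) ∉ wv.edges →
      (⟨(a, b), hab⟩ : T.Dart) ∈ w.darts := by
  intro u v w
  induction w with
  | nil =>
    intro wu hwu wv hwv
    exact absurd ⟨wu.reverse.append wv.reverse, by
      rw [SimpleGraph.Walk.edges_append, List.mem_append,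
        SimpleGraph.Walk.edges_reverse, SimpleGraph.Walk.edges_reverse]
      simp only [List.mem_reverse]
      tauto⟩ hbr
  | @cons u x v h w' ih =>
    intro wu hwu wv hwv
    rw [SimpleGraph.Walk.darts_cons, List.mem_cons]
    by_cases hcase : u = a ∧ x = b
    · obtain ⟨rfl, rfl⟩ := hcase
      left; rfl
    · right
      have hne : s(u, x) ≠ s(a, b) := by
        intro heq
        rcases Sym2.eq_iff.mp heq with ⟨h1, h2⟩ | ⟨h1, h2⟩
        · exact hcase ⟨h1, h2⟩
        · subst h1; subst h2
          refine hbr ⟨wu.reverse, ?_⟩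
          rw [SimpleGraph.Walk.edges_reverse, List.mem_reverse]
          exact hwu
      refine ih (SimpleGraph.Walk.cons h.symm wu) ?_ wv hwv
      rw [SimpleGraph.Walk.edges_cons, List.mem_cons]
      rintro (heq | hmem)
      · exact hne (Sym2.eq_swap.trans heq.symm)
      · exact hwu hmem

lemma walk_of_rtg {D : V → V → Prop} (hD : ∀ x y, D x y → T.Adj x y) {u v : V}
    (h : Relation.ReflTransGen D u v) :
    ∃ w : T.Walk u v, ∀ d ∈ w.darts, D d.fst d.snd := by
  induction h with
  | refl => exact ⟨SimpleGraph.Walk.nil, by simp⟩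
  | @tail x y hux hxy ih =>
    obtain ⟨w, hw⟩ := ih
    refine ⟨w.concat (hD _ _ hxy), ?_⟩
    intro d hd
    rw [SimpleGraph.Walk.darts_concat, List.concat_eq_append, List.mem_append,
      List.mem_singleton] at hd
    rcases hd with hd | rfl
    · exact hw d hd
    · exact hxy

lemma rtg_of_walk {D : V → V → Prop} {u v : V} (w : T.Walk u v)
    (hw : ∀ d ∈ w.darts, D d.fst d.snd) : Relation.ReflTransGen D u v := by
  induction w with
  | nil => exact Relation.ReflTransGen.refl
  | @cons u x v h w' ih =>
    refine Relation.ReflTransGen.head (hw ⟨(u, x), h⟩ ?_) (ih ?_)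
    · rw [SimpleGraph.Walk.darts_cons]; exact List.mem_cons_self
    · intro d hd
      exact hw d (by rw [SimpleGraph.Walk.darts_cons]; exact List.mem_cons_of_mem _ hd)

end ProofAux


/-- a tree `T` is `P`-orientable iff no two pairs of `P` force the same
edge of `T` to be traversed in both directions (by the unique paths joining the pairs). -/
theorem tree_orientable_iff_no_conflict
    {V : Type*} [Fintype V] (T : SimpleGraph V) (hT : T.IsTree) (P : Set (V × V)) :
    POrientable T P ↔
      ¬ ∃ (p₁ p₂ : V × V), p₁ ∈ P ∧ p₂ ∈ P ∧
        ∃ (a b : V) (hab : T.Adj a b) (w₁ : T.Walk p₁.1 p₁.2) (w₂ : T.Walk p₂.1 p₂.2),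
          w₁.IsPath ∧ w₂.IsPath ∧
          (⟨(a, b), hab⟩ : T.Dart) ∈ w₁.darts ∧ (⟨(b, a), hab.symm⟩ : T.Dart) ∈ w₂.darts := by
  have hbridge : ∀ {a b : V}, T.Adj a b → ¬ ∃ p : T.Walk a b, s(a, b) ∉ p.edges := by
    intro a b hab
    have hbr : T.IsBridge s(a, b) :=
      (SimpleGraph.isAcyclic_iff_forall_adj_isBridge.mp hT.2) hab
    rw [SimpleGraph.isBridge_iff, SimpleGraph.reachable_delete_edges_iff_exists_walk] at hbr
    exact hbr
  constructor
  · rintro ⟨D, hor, hsat⟩ ⟨p₁, p₂, hp₁, hp₂, a, b, hab, w₁, w₂, hw₁, hw₂, hd₁, hd₂⟩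
    have hDadj : ∀ x y, D x y → T.Adj x y := fun x y h => ((hor x y).1).mpr (Or.inl h)
    have hDab : D a b := by
      obtain ⟨wu, wv, h₁, h₂⟩ := ProofAux.path_split w₁ hw₁ hab hd₁
      obtain ⟨w, hw⟩ := ProofAux.walk_of_rtg hDadj (hsat p₁ hp₁)
      exact hw _ (ProofAux.cross hab (hbridge hab) w wu h₁ wv h₂)
    have hDba : D b a := by
      obtain ⟨wu, wv, h₁, h₂⟩ := ProofAux.path_split w₂ hw₂ hab.symm hd₂
      obtain ⟨w, hw⟩ := ProofAux.walk_of_rtg hDadj (hsat p₂ hp₂)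
      have hbr' : ¬ ∃ p : T.Walk b a, s(b, a) ∉ p.edges := by
        rintro ⟨p, hp⟩
        refine hbridge hab ⟨p.reverse, ?_⟩
        rw [SimpleGraph.Walk.edges_reverse, List.mem_reverse, Sym2.eq_swap]
        exact hp
      exact hw _ (ProofAux.cross hab.symm hbr' w wu h₁ wv h₂)
    exact (hor a b).2 ⟨hDab, hDba⟩
  · intro hcon
    classical
    set r : V → V → Prop := WellOrderingRel with hr
    have : IsWellOrder V r := WellOrderingRel.isWellOrder
    set Use : V → V → Prop := fun x y =>
      ∃ p ∈ P, ∃ (w : T.Walk p.1 p.2) (h : T.Adj x y),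
        w.IsPath ∧ (⟨(x, y), h⟩ : T.Dart) ∈ w.darts with hUse
    have hnoconf : ∀ x y, T.Adj x y → ¬ (Use x y ∧ Use y x) := by
      rintro x y hxy ⟨⟨p₁, hp₁, w₁, h₁, hw₁, hd₁⟩, ⟨p₂, hp₂, w₂, h₂, hw₂, hd₂⟩⟩
      exact hcon ⟨p₁, p₂, hp₁, hp₂, x, y, hxy, w₁, w₂, hw₁, hw₂, hd₁, hd₂⟩
    refine ⟨fun x y => T.Adj x y ∧ (Use x y ∨ (¬ Use x y ∧ ¬ Use y x ∧ r x y)), ?_, ?_⟩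
    · intro u v
      constructor
      · constructor
        · intro huv
          by_cases h1 : Use u v
          · exact Or.inl ⟨huv, Or.inl h1⟩
          by_cases h2 : Use v u
          · exact Or.inr ⟨huv.symm, Or.inl h2⟩
          rcases trichotomous_of r u v with h | h | h
          · exact Or.inl ⟨huv, Or.inr ⟨h1, h2, h⟩⟩
          · exact absurd h huv.ne
          · exact Or.inr ⟨huv.symm, Or.inr ⟨h2, h1, h⟩⟩
        · rintro (⟨h, -⟩ | ⟨h, -⟩)
          · exact h
          · exact h.symm
      · rintro ⟨⟨hadj, huv⟩, ⟨-, hvu⟩⟩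
        rcases huv with h1 | ⟨h1, h1', hlt1⟩ <;> rcases hvu with h2 | ⟨h2, h2', hlt2⟩
        · exact hnoconf u v hadj ⟨h1, h2⟩
        · exact h2' h1
        · exact h1' h2
        · exact asymm hlt1 hlt2
    · intro p hp
      obtain ⟨w0⟩ := hT.1 p.1 p.2
      set w := w0.toPath
      refine ProofAux.rtg_of_walk w.1 ?_
      intro d hd
      have hde : (⟨(d.fst, d.snd), d.adj⟩ : T.Dart) = d := rfl
      exact ⟨d.adj, Or.inl ⟨p, hp, w.1, d.adj, w.2, hde ▸ hd⟩⟩
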